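/- Let p be an odd prime with p ≡ 3 (mod 4), and let d be the minimum distance of the quadratic residue code of length p over F_2 generated by g_R(x) = ∏_{i∈Q}(x - α^i). Then d² - d + 1 ≥ p. -/

import Mathlib

open Polynomial

/-- The polynomial `∑ cᵢ xⁱ` associated with a word `c ∈ F_2ⁿ`. -/
noncomputable def toPoly (n : ℕ) (c : Fin n → ZMod 2) : Polynomial (ZMod 2) :=
  ∑ i : Fin n, Polynomial.C (c i) * Polynomial.X ^ (i : ℕ)

theorem toPoly_add (n : ℕ) (a b : Fin n → ZMod 2) :
    toPoly n (a + b) = toPoly n a + toPoly n b := by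
  simp [toPoly, add_mul, Finset.sum_add_distrib]

theorem toPoly_smul (n : ℕ) (r : ZMod 2) (a : Fin n → ZMod 2) :
    toPoly n (r • a) = Polynomial.C r * toPoly n a := by
  simp [toPoly, Finset.mul_sum, mul_assoc]

/-- The cyclic code of length `n` over `F_2` with generator polynomial `g`:
words whose associated polynomial (of degree `< n`) is divisible by `g`. -/
noncomputable def codeOf (n : ℕ) (g : Polynomial (ZMod 2)) :
    Submodule (ZMod 2) (Fin n → ZMod 2) where
  carrier := {c | g ∣ toPoly n c}
  add_mem' := by
    intro a b ha hb
    show g ∣ toPoly n (a + b)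
    rw [toPoly_add]; exact dvd_add ha hb
  zero_mem' := by
    show g ∣ toPoly n 0
    simp [toPoly]
  smul_mem' := by
    intro r a ha
    show g ∣ toPoly n (r • a)
    rw [toPoly_smul]; exact Dvd.dvd.mul_left ha _

set_option linter.unusedSectionVars false
set_option maxHeartbeats 1000000

open Finset


section Basic

variable {p : ℕ} [Fact p.Prime] {K : Type*} [Field K] [Algebra (ZMod 2) K] {α : K}

theorem pow_mod' (hα : IsPrimitiveRoot α p) (m : ℕ) : α ^ (m % p) = α ^ m := by
  conv_rhs => rw [← Nat.div_add_mod m p]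
  rw [pow_add, pow_mul, hα.pow_eq_one, one_pow, one_mul]

theorem pv_add (hα : IsPrimitiveRoot α p) (a b : ZMod p) :
    α ^ (a + b).val = α ^ a.val * α ^ b.val := by
  rw [ZMod.val_add, pow_mod' hα, pow_add]

theorem pv_natCast (hα : IsPrimitiveRoot α p) (n : ℕ) :
    α ^ ((n : ZMod p)).val = α ^ n := by
  rw [ZMod.val_natCast, pow_mod' hα]

theorem alpha_ne_one (hα : IsPrimitiveRoot α p) : α ≠ 1 := by
  intro h
  have h2 : (2 : ℕ) ≤ p := (Fact.out : p.Prime).two_le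
  have := hα.pow_inj (i := 1) (j := 0) (by omega) (by omega) (by simp [h])
  omega

theorem sum_pow_val (hα : IsPrimitiveRoot α p) : ∑ z : ZMod p, α ^ z.val = 0 := by
  have h1 : ∑ z : ZMod p, α ^ z.val = ∑ i ∈ range p, α ^ i := by
    refine Finset.sum_bij' (fun z _ => z.val) (fun i _ => (i : ZMod p)) ?_ ?_ ?_ ?_ ?_
    · intro z _; exact mem_range.mpr z.val_lt
    · intro i _; exact mem_univ _
    · intro z _; simp [ZMod.natCast_val, ZMod.cast_id]
    · intro i hi; exact ZMod.val_cast_of_lt (mem_range.mp hi)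
    · intro z _; rfl
  rw [h1]
  have h2 := geom_sum_mul α p
  rw [hα.pow_eq_one, sub_self] at h2
  rcases mul_eq_zero.mp h2 with h | h
  · exact h
  · exact absurd (sub_eq_zero.mp h) (alpha_ne_one hα)

theorem sum_pow_val_mul (hα : IsPrimitiveRoot α p) (hodd : p % 2 = 1) (w : ZMod p) :
    ∑ z : ZMod p, α ^ (z * w).val = if w = 0 then 1 else 0 := by
  split_ifs with hw
  · subst hw
    simp only [mul_zero, ZMod.val_zero, pow_zero]
    rw [Finset.sum_const, card_univ, ZMod.card, nsmul_eq_mul, mul_one]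
    have : ((p : ℕ) : K) = algebraMap (ZMod 2) K ((p : ℕ) : ZMod 2) := by
      rw [map_natCast]
    rw [this]
    have hp2 : ((p : ℕ) : ZMod 2) = 1 := by
      conv_lhs => rw [← Nat.mod_add_div p 2, hodd]
      push_cast
      rw [show (2:ZMod 2) = 0 by decide]
      ring
    rw [hp2, map_one]
  · have := Equiv.sum_comp (Equiv.mulRight₀ w hw) (fun z : ZMod p => α ^ z.val)
    simp only [Equiv.mulRight₀_apply] at this
    rw [this, sum_pow_val hα]

end Basic
section Transform

variable {p : ℕ} [Fact p.Prime] {K : Type*} [Field K] [Algebra (ZMod 2) K]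

/-- Discrete Fourier-type transform of a binary word. -/
noncomputable def T {p : ℕ} [NeZero p] {K : Type*} [Field K] [Algebra (ZMod 2) K]
    (α : K) (c : ZMod p → ZMod 2) (k : ZMod p) : K :=
  ∑ y : ZMod p, algebraMap (ZMod 2) K (c y) * α ^ (k * y).val

variable {α : K}

theorem inv_T (hα : IsPrimitiveRoot α p) (hodd : p % 2 = 1) (c : ZMod p → ZMod 2)
    (z : ZMod p) :
    algebraMap (ZMod 2) K (c z) = ∑ m : ZMod p, T α c m * α ^ (-(m * z)).val := by
  symm
  have key : ∀ m y : ZMod p, α ^ (m * y).val * α ^ (-(m * z)).val = α ^ (m * (y - z)).val := by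
    intro m y; rw [← pv_add hα]; congr 1; ring
  calc ∑ m : ZMod p, T α c m * α ^ (-(m * z)).val
      = ∑ m : ZMod p, ∑ y : ZMod p,
          algebraMap (ZMod 2) K (c y) * α ^ (m * (y - z)).val := by
        refine Finset.sum_congr rfl fun m _ => ?_
        rw [T, Finset.sum_mul]
        refine Finset.sum_congr rfl fun y _ => ?_
        rw [mul_assoc, key]
    _ = ∑ y : ZMod p, algebraMap (ZMod 2) K (c y) * ∑ m : ZMod p, α ^ (m * (y - z)).val := by
        rw [Finset.sum_comm]
        exact Finset.sum_congr rfl fun y _ => by rw [Finset.mul_sum]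
    _ = ∑ y : ZMod p, algebraMap (ZMod 2) K (c y) * (if y - z = 0 then 1 else 0) := by
        refine Finset.sum_congr rfl fun y _ => ?_
        rw [sum_pow_val_mul hα hodd]
    _ = algebraMap (ZMod 2) K (c z) := by
        simp [sub_eq_zero]

theorem nsq_mul_nsq (hp2 : p ≠ 2) {a b : ZMod p} (ha : ¬IsSquare a) (hb : ¬IsSquare b) :
    IsSquare (a * b) := by
  have ha0 : a ≠ 0 := fun h => ha (h ▸ ⟨0, by ring⟩)
  have hb0 : b ≠ 0 := fun h => hb (h ▸ ⟨0, by ring⟩)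
  have hchar : ringChar (ZMod p) ≠ 2 := by rw [ZMod.ringChar_zmod_n]; exact hp2
  rw [FiniteField.isSquare_iff hchar (mul_ne_zero ha0 hb0)]
  rw [FiniteField.isSquare_iff hchar ha0] at ha
  rw [FiniteField.isSquare_iff hchar hb0] at hb
  have da := (FiniteField.pow_dichotomy hchar ha0).resolve_left ha
  have db := (FiniteField.pow_dichotomy hchar hb0).resolve_left hb
  rw [mul_pow, da, db, neg_mul_neg, one_mul]

theorem nsq_mul_sq {a b : ZMod p} (ha : ¬IsSquare a) (hb : IsSquare b) (hb0 : b ≠ 0) :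
    ¬IsSquare (a * b) := by
  obtain ⟨s, rfl⟩ := hb
  have hs : s ≠ 0 := fun h => hb0 (by rw [h, mul_zero])
  rintro ⟨w, hw⟩
  exact ha ⟨w * s⁻¹, by field_simp; linear_combination hw⟩

theorem char_two_add (x : K) : x + x = 0 := by
  have h20 : (2 : K) = 0 := by
    have : ((2 : ℕ) : K) = algebraMap (ZMod 2) K ((2 : ℕ) : ZMod 2) := by rw [map_natCast]
    have h2 : ((2 : ℕ) : ZMod 2) = 0 := by decide
    rw [h2, map_zero] at this
    exact_mod_cast this
  rw [← two_mul, h20, zero_mul]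

theorem kloos (hα : IsPrimitiveRoot α p) {a b : ZMod p} (hab : ¬IsSquare (a * b)) :
    ∑ z ∈ Finset.univ.erase (0 : ZMod p), α ^ (a * z + b * z⁻¹).val = 0 := by
  have ha : a ≠ 0 := fun h => hab (by rw [h, zero_mul]; exact ⟨0, by ring⟩)
  have hb : b ≠ 0 := fun h => hab (by rw [h, mul_zero]; exact ⟨0, by ring⟩)
  refine Finset.sum_involution (fun z _ => b * a⁻¹ * z⁻¹) ?_ ?_ ?_ ?_
  · intro z hz
    have hz0 : z ≠ 0 := (Finset.mem_erase.mp hz).1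
    have harg : a * (b * a⁻¹ * z⁻¹) + b * (b * a⁻¹ * z⁻¹)⁻¹ = a * z + b * z⁻¹ := by
      field_simp
      ring
    rw [harg]
    exact char_two_add _
  · intro z hz _ heq
    have hz0 : z ≠ 0 := (Finset.mem_erase.mp hz).1
    refine hab ⟨a * z, ?_⟩
    have : b * a⁻¹ * z⁻¹ = z := heq
    field_simp at this
    linear_combination a * this
  · intro z hz
    refine Finset.mem_erase.mpr ⟨?_, Finset.mem_univ _⟩
    have hz0 : z ≠ 0 := (Finset.mem_erase.mp hz).1
    simp [ha, hb, hz0]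
  · intro z hz
    have hz0 : z ≠ 0 := (Finset.mem_erase.mp hz).1
    field_simp

theorem GP (hα : IsPrimitiveRoot α p) (hodd : p % 2 = 1) (hp2 : p ≠ 2)
    (c : ZMod p → ZMod 2)
    (hc : ∀ k : ZMod p, k ≠ 0 → IsSquare k → T α c k = 0)
    (h0 : T α c 0 = 0)
    {k : ZMod p} (hk : k ≠ 0) (hks : IsSquare k) :
    T α (fun y => if y = 0 then 0 else c (-y⁻¹)) k = 0 := by
  have e1 : T α (fun y => if y = 0 then 0 else c (-y⁻¹)) k
      = ∑ y ∈ Finset.univ.erase (0 : ZMod p),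
          algebraMap (ZMod 2) K (c (-y⁻¹)) * α ^ (k * y).val := by
    rw [T, ← Finset.add_sum_erase _ _ (Finset.mem_univ (0 : ZMod p))]
    rw [if_pos rfl, map_zero, zero_mul, zero_add]
    refine Finset.sum_congr rfl fun y hy => ?_
    rw [if_neg (Finset.mem_erase.mp hy).1]
  have e2 : ∑ y ∈ Finset.univ.erase (0 : ZMod p),
        algebraMap (ZMod 2) K (c (-y⁻¹)) * α ^ (k * y).val
      = ∑ z ∈ Finset.univ.erase (0 : ZMod p),
          algebraMap (ZMod 2) K (c z) * α ^ (k * (-z⁻¹)).val := by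
    refine Finset.sum_nbij' (fun y => -y⁻¹) (fun z => -z⁻¹) ?_ ?_ ?_ ?_ ?_
    · intro y hy
      have : y ≠ 0 := (Finset.mem_erase.mp hy).1
      exact Finset.mem_erase.mpr ⟨by simp [this], Finset.mem_univ _⟩
    · intro z hz
      have : z ≠ 0 := (Finset.mem_erase.mp hz).1
      exact Finset.mem_erase.mpr ⟨by simp [this], Finset.mem_univ _⟩
    · intro y _; rw [inv_neg, inv_inv, neg_neg]
    · intro z _; rw [inv_neg, inv_inv, neg_neg]
    · intro y _
      rw [inv_neg, inv_inv, neg_neg]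
  have e3 : ∀ z : ZMod p,
      algebraMap (ZMod 2) K (c z) * α ^ (k * (-z⁻¹)).val
      = ∑ m : ZMod p, T α c m * α ^ ((-m) * z + (-k) * z⁻¹).val := by
    intro z
    rw [inv_T hα hodd c z, Finset.sum_mul]
    refine Finset.sum_congr rfl fun m _ => ?_
    rw [mul_assoc, ← pv_add hα]
    congr 2
    ring
  rw [e1, e2]
  calc ∑ z ∈ Finset.univ.erase (0 : ZMod p),
        algebraMap (ZMod 2) K (c z) * α ^ (k * (-z⁻¹)).val
      = ∑ z ∈ Finset.univ.erase (0 : ZMod p), ∑ m : ZMod p,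
          T α c m * α ^ ((-m) * z + (-k) * z⁻¹).val := Finset.sum_congr rfl fun z _ => e3 z
    _ = ∑ m : ZMod p, T α c m *
          ∑ z ∈ Finset.univ.erase (0 : ZMod p), α ^ ((-m) * z + (-k) * z⁻¹).val := by
        rw [Finset.sum_comm]
        exact Finset.sum_congr rfl fun m _ => by rw [Finset.mul_sum]
    _ = 0 := by
        refine Finset.sum_eq_zero fun m _ => ?_
        by_cases hm0 : m = 0
        · rw [hm0, h0, zero_mul]
        · by_cases hms : IsSquare m
          · rw [hc m hm0 hms, zero_mul]
          · have hab : ¬IsSquare ((-m) * (-k)) := by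
              rw [neg_mul_neg]
              exact nsq_mul_sq hms hks hk
            rw [kloos hα hab, mul_zero]

end Transform
section StepDown

variable {p : ℕ} [Fact p.Prime] {K : Type*} [Field K] [Algebra (ZMod 2) K] {α : K}

theorem pv_neg_mul (hα : IsPrimitiveRoot α p) (a : ZMod p) :
    α ^ (-a).val * α ^ a.val = 1 := by
  rw [← pv_add hα, neg_add_cancel]
  simp [ZMod.val_zero]

theorem T_translate (hα : IsPrimitiveRoot α p) (c : ZMod p → ZMod 2) (y0 k : ZMod p) :
    T α (fun y => c (y + y0)) k = α ^ (-(k * y0)).val * T α c k := by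
  rw [T, T, Finset.mul_sum]
  refine Fintype.sum_equiv (Equiv.addRight y0) _ _ fun y => ?_
  simp only [Equiv.coe_addRight]
  rw [show k * (y + y0) = k * y + k * y0 by ring, pv_add hα]
  rw [show α ^ (-(k * y0)).val * (algebraMap (ZMod 2) K (c (y + y0)) * (α ^ (k * y).val * α ^ (k * y0).val))
      = algebraMap (ZMod 2) K (c (y + y0)) * α ^ (k * y).val * (α ^ (-(k * y0)).val * α ^ (k * y0).val) by ring,
    pv_neg_mul hα, mul_one]

theorem sum_word (c : ZMod p → ZMod 2) :
    ∑ y : ZMod p, c y = ((Finset.univ.filter (fun y => c y ≠ 0)).card : ZMod 2) := by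
  classical
  rw [← Finset.sum_filter_ne_zero]
  have h1 : ∀ y ∈ Finset.univ.filter (fun y : ZMod p => c y ≠ 0), c y = 1 := by
    intro y hy
    have := (Finset.mem_filter.mp hy).2
    revert this
    have : ∀ x : ZMod 2, x ≠ 0 → x = 1 := by decide
    exact this _
  rw [Finset.sum_congr rfl h1, Finset.sum_const, nsmul_eq_mul, mul_one]

theorem T_zero_eq (hα : IsPrimitiveRoot α p) (c : ZMod p → ZMod 2) :
    T α c 0 = algebraMap (ZMod 2) K
      (((Finset.univ.filter (fun y => c y ≠ 0)).card : ZMod 2)) := by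
  rw [T, ← sum_word c, map_sum]
  refine Finset.sum_congr rfl fun y _ => ?_
  rw [zero_mul, ZMod.val_zero, pow_zero, mul_one]

theorem step_down (hα : IsPrimitiveRoot α p) (hodd : p % 2 = 1) (hp2 : p ≠ 2)
    (c : ZMod p → ZMod 2)
    (hc : ∀ k : ZMod p, k ≠ 0 → IsSquare k → T α c k = 0)
    (h0 : T α c 0 = 0)
    {y0 : ZMod p} (hy0 : c y0 ≠ 0) :
    ∃ c' : ZMod p → ZMod 2, (∀ k : ZMod p, k ≠ 0 → IsSquare k → T α c' k = 0) ∧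
      (Finset.univ.filter (fun y => c' y ≠ 0)).card + 1
        = (Finset.univ.filter (fun y => c y ≠ 0)).card := by
  classical
  set c1 : ZMod p → ZMod 2 := fun y => c (y + y0) with hc1def
  have hc1c : ∀ k : ZMod p, k ≠ 0 → IsSquare k → T α c1 k = 0 := fun k hk hks => by
    rw [hc1def, T_translate hα c y0 k, hc k hk hks, mul_zero]
  have hc10 : T α c1 0 = 0 := by rw [hc1def, T_translate hα c y0 0, h0, mul_zero]
  refine ⟨fun y => if y = 0 then 0 else c1 (-y⁻¹),
    fun k hk hks => GP hα hodd hp2 c1 hc1c hc10 hk hks, ?_⟩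
  have h0mem : (0 : ZMod p) ∈ Finset.univ.filter (fun y => c1 y ≠ 0) := by
    simp only [Finset.mem_filter, Finset.mem_univ, true_and, hc1def]
    simpa using hy0
  have hcard1 : (Finset.univ.filter (fun y => (if y = 0 then (0 : ZMod 2) else c1 (-y⁻¹)) ≠ 0)).card
      = ((Finset.univ.filter (fun y => c1 y ≠ 0)).erase 0).card := by
    refine Finset.card_nbij' (fun y => -y⁻¹) (fun z => -z⁻¹) ?_ ?_ ?_ ?_
    · intro y hy
      simp only [Finset.mem_coe, Finset.mem_filter, Finset.mem_univ, true_and] at hy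
      by_cases hy0' : y = 0
      · simp [hy0'] at hy
      · rw [if_neg hy0'] at hy
        refine Finset.mem_erase.mpr ⟨by simp [hy0'], ?_⟩
        simp only [Finset.mem_filter, Finset.mem_univ, true_and]
        exact hy
    · intro z hz
      have hz0 : z ≠ 0 := (Finset.mem_erase.mp hz).1
      have hzc : c1 z ≠ 0 := by
        have := (Finset.mem_erase.mp hz).2
        simpa using this
      simp only [Finset.mem_coe, Finset.mem_filter, Finset.mem_univ, true_and]
      rw [if_neg (by simp [hz0] : (-z⁻¹ : ZMod p) ≠ 0)]
      rw [inv_neg, inv_inv, neg_neg]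
      exact hzc
    · intro y _; dsimp only; rw [inv_neg, inv_inv, neg_neg]
    · intro z _; dsimp only; rw [inv_neg, inv_inv, neg_neg]
  have hcard2 : (Finset.univ.filter (fun y => c1 y ≠ 0)).card
      = (Finset.univ.filter (fun y => c y ≠ 0)).card := by
    refine Finset.card_nbij' (fun y => y + y0) (fun z => z - y0) ?_ ?_ ?_ ?_
    · intro y hy
      simp only [Finset.mem_coe, Finset.mem_filter, Finset.mem_univ, true_and, hc1def] at hy ⊢
      exact hy
    · intro z hz
      simp only [Finset.mem_coe, Finset.mem_filter, Finset.mem_univ, true_and, hc1def] at hz ⊢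
      simpa [sub_add_cancel] using hz
    · intro y _; dsimp only; ring
    · intro z _; dsimp only; ring
  rw [hcard1, ← hcard2, Finset.card_erase_add_one h0mem]

end StepDown
section Main

theorem prod_dvd_of_roots {L : Type*} [Field L] (s : Finset ℕ) (r : ℕ → L) :
    ∀ f : Polynomial L, (∀ i ∈ s, ∀ j ∈ s, r i = r j → i = j) →
      (∀ i ∈ s, f.eval (r i) = 0) → (∏ i ∈ s, (X - C (r i))) ∣ f := by
  classical
  induction s using Finset.induction_on with
  | empty => intro f _ _; simp
  | @insert a s' ha ih =>
    intro f hinj hroots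
    have hdvd : (X - C (r a)) ∣ f :=
      dvd_iff_isRoot.mpr (hroots a (Finset.mem_insert_self a s'))
    obtain ⟨q, rfl⟩ := hdvd
    rw [Finset.prod_insert ha]
    refine mul_dvd_mul_left _ (ih q
      (fun i hi j hj hij =>
        hinj i (Finset.mem_insert_of_mem hi) j (Finset.mem_insert_of_mem hj) hij) ?_)
    intro i hi
    have h1 := hroots i (Finset.mem_insert_of_mem hi)
    rw [eval_mul, eval_sub, eval_X, eval_C] at h1
    have hne : r i - r a ≠ 0 := by
      refine sub_ne_zero.mpr fun hre => ?_
      have hia : i = a := hinj i (Finset.mem_insert_of_mem hi) a (Finset.mem_insert_self a s') hre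
      exact ha (hia ▸ hi)
    rcases mul_eq_zero.mp h1 with h | h
    · exact absurd h hne
    · exact h


theorem X_pow_sub_one_prod_range {L : Type*} [Field L] {p : ℕ} (hp : 0 < p) {α : L}
    (hα : IsPrimitiveRoot α p) :
    (X : Polynomial L) ^ p - 1 = ∏ i ∈ Finset.range p, (X - C (α ^ i)) := by
  have hdvd : (∏ i ∈ Finset.range p, (X - C (α ^ i))) ∣ ((X : Polynomial L) ^ p - 1) := by
    refine prod_dvd_of_roots _ _ _ (fun i hi j hj hij =>
      hα.pow_inj (Finset.mem_range.mp hi) (Finset.mem_range.mp hj) hij) ?_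
    intro i _
    rw [eval_sub, eval_pow, eval_X, eval_one, ← pow_mul, mul_comm, pow_mul, hα.pow_eq_one,
      one_pow, sub_self]
  obtain ⟨v, hv⟩ := hdvd
  have hm : (∏ i ∈ Finset.range p, (X - C (α ^ i))).Monic :=
    monic_prod_of_monic _ _ fun i _ => monic_X_sub_C _
  have hmx : ((X : Polynomial L) ^ p - 1).Monic := by
    have := monic_X_pow_sub_C (1 : L) (by omega : p ≠ 0)
    rwa [map_one] at this
  have hv0 : v ≠ 0 := fun hz => by rw [hz, mul_zero] at hv; exact hmx.ne_zero hv
  have hdeg : (∏ i ∈ Finset.range p, (X - C (α ^ i))).natDegree = p := by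
    rw [natDegree_prod _ _ fun i _ => X_sub_C_ne_zero _]
    have hdeg1 : ∀ i ∈ Finset.range p, (X - C (α ^ i)).natDegree = 1 :=
      fun i _ => natDegree_X_sub_C _
    rw [Finset.sum_congr rfl hdeg1, Finset.sum_const, smul_eq_mul, mul_one, Finset.card_range]
  have hdx : ((X : Polynomial L) ^ p - 1).natDegree = p := by
    have := natDegree_X_pow_sub_C (n := p) (r := (1 : L))
    rwa [map_one] at this
  have hvdeg : v.natDegree = 0 := by
    have h1 := natDegree_mul hm.ne_zero hv0
    rw [← hv] at h1
    omega
  have hvl : v.leadingCoeff = 1 := by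
    have h1 : ((∏ i ∈ Finset.range p, (X - C (α ^ i))) * v).leadingCoeff
        = (∏ i ∈ Finset.range p, (X - C (α ^ i))).leadingCoeff * v.leadingCoeff :=
      leadingCoeff_mul _ _
    rw [← hv, hmx.leadingCoeff, hm.leadingCoeff, one_mul] at h1
    exact h1.symm
  have hv1 : v = 1 := by
    have h1 := Polynomial.eq_C_of_natDegree_eq_zero hvdeg
    rw [h1] at hvl ⊢
    rw [leadingCoeff_C] at hvl
    rw [hvl, map_one]
  rw [hv, hv1, mul_one]

theorem aux_main (p : ℕ) [Fact p.Prime] (hp4 : p % 4 = 3)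
    {K : Type*} [Field K] [Algebra (ZMod 2) K] {α : K} (hα : IsPrimitiveRoot α p)
    (d : ℕ)
    (hd : IsLeast {w : ℕ | ∃ c : ZMod p → ZMod 2,
        (∀ k : ZMod p, k ≠ 0 → IsSquare k → T α c k = 0) ∧ c ≠ 0 ∧
        w = (Finset.univ.filter (fun y => c y ≠ 0)).card} d) :
    d ^ 2 - d + 1 ≥ p := by
  classical
  obtain ⟨⟨c, hc, hc0, hcd⟩, hlb⟩ := hd
  have hodd : p % 2 = 1 := by omega
  have hp2 : p ≠ 2 := by omega
  have hppos : 0 < p := by omega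
  set φ := algebraMap (ZMod 2) K with hφ
  set S := Finset.univ.filter (fun y => c y ≠ 0) with hS
  have hone : ∀ x : ZMod 2, x ≠ 0 → x = 1 := by decide
  have hd1 : 1 ≤ d := by
    obtain ⟨y, hy⟩ := Function.ne_iff.mp hc0
    have : y ∈ S := Finset.mem_filter.mpr ⟨Finset.mem_univ _, hy⟩
    have := Finset.card_pos.mpr ⟨y, this⟩
    omega
  -- minimum weight is odd
  have hparity : ((d : ℕ) : ZMod 2) = 1 := by
    by_contra hne
    have hdeven : ((d : ℕ) : ZMod 2) = 0 := by
      have : ∀ x : ZMod 2, x ≠ 1 → x = 0 := by decide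
      exact this _ hne
    have h0 : T α c 0 = 0 := by
      rw [T_zero_eq hα c, ← hS, ← hcd, hdeven, map_zero]
    obtain ⟨y0, hy0⟩ := Function.ne_iff.mp hc0
    obtain ⟨c', hc', hcard⟩ := step_down hα hodd hp2 c hc h0 hy0
    rw [← hS, ← hcd] at hcard
    have hd2 : 2 ≤ d := by
      rcases Nat.lt_or_ge d 2 with hlt | hge
      · exfalso
        have hdone : d = 1 := by omega
        rw [hdone] at hdeven
        exact absurd hdeven (by decide)
      · exact hge
    have hcnz : c' ≠ 0 := by
      intro hz
      rw [hz] at hcard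
      simp at hcard
      omega
    have := hlb ⟨c', hc', hcnz, rfl⟩
    omega
  -- polynomials
  set f : Polynomial (ZMod 2) := ∑ z ∈ S, X ^ z.val with hf
  set g : Polynomial (ZMod 2) := ∑ z ∈ S, X ^ (p - 1 - z.val) with hg
  set h : Polynomial (ZMod 2) := f * g with hh
  set e : Polynomial (ZMod 2) := ∑ i ∈ Finset.range p, X ^ i with he
  have hTS : ∀ k : ZMod p, T α c k = ∑ z ∈ S, α ^ (k * z).val := by
    intro k
    rw [T]
    rw [← Finset.sum_subset (Finset.filter_subset _ _ : S ⊆ Finset.univ)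
      (fun y _ hy => by
        have : c y = 0 := by
          by_contra hcy
          exact hy (Finset.mem_filter.mpr ⟨Finset.mem_univ _, hcy⟩)
        rw [this, map_zero, zero_mul])]
    refine Finset.sum_congr rfl fun z hz => ?_
    rw [hone _ (Finset.mem_filter.mp hz).2, map_one, one_mul]
  have hvalpow : ∀ (k : ZMod p) (n : ℕ), α ^ (k.val * n) = α ^ (k * (n : ZMod p)).val := by
    intro k n
    rw [ZMod.val_mul, pow_mod' hα, ZMod.val_natCast]
    conv_lhs => rw [← Nat.div_add_mod n p, Nat.mul_add, pow_add, Nat.mul_left_comm,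
      pow_mul, hα.pow_eq_one, one_pow, one_mul]
  have hevalf : ∀ k : ZMod p, (f.map φ).eval (α ^ k.val) = T α c k := by
    intro k
    rw [hf, Polynomial.map_sum, eval_finset_sum, hTS]
    refine Finset.sum_congr rfl fun z hz => ?_
    rw [Polynomial.map_pow, map_X, eval_pow, eval_X, ← pow_mul, hvalpow]
    congr 1
    rw [ZMod.natCast_val, ZMod.cast_id]
  have hevalg : ∀ k : ZMod p,
      (g.map φ).eval (α ^ k.val) = α ^ (-k).val * T α c (-k) := by
    intro k
    rw [hg, Polynomial.map_sum, eval_finset_sum, hTS, Finset.mul_sum]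
    refine Finset.sum_congr rfl fun z hz => ?_
    rw [Polynomial.map_pow, map_X, eval_pow, eval_X, ← pow_mul, hvalpow]
    have hzval : ((p - 1 - z.val : ℕ) : ZMod p) = -1 - z := by
      have hlt : z.val < p := z.val_lt
      have hsum : (p - 1 - z.val) + (z.val + 1) = p := by omega
      have hcast : ((p - 1 - z.val : ℕ) : ZMod p) + ((z.val + 1 : ℕ) : ZMod p) = 0 := by
        rw [← Nat.cast_add, hsum, ZMod.natCast_self]
      have hzc : ((z.val : ℕ) : ZMod p) = z := by rw [ZMod.natCast_val, ZMod.cast_id]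
      rw [Nat.cast_add, Nat.cast_one, hzc] at hcast
      linear_combination hcast
    rw [hzval, show k * (-1 - z) = -k + -k * z by ring, pv_add hα]
  have hroots : ∀ j ∈ Finset.Ico 1 p, (h.map φ).eval (α ^ j) = 0 := by
    intro j hj
    obtain ⟨hj1, hjp⟩ := Finset.mem_Ico.mp hj
    set k : ZMod p := (j : ZMod p) with hk
    have hkval : k.val = j := ZMod.val_cast_of_lt hjp
    have hk0 : k ≠ 0 := by
      intro hz
      rw [hz, ZMod.val_zero] at hkval
      omega
    rw [hh, Polynomial.map_mul, eval_mul, ← hkval]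
    by_cases hks : IsSquare k
    · rw [hevalf k, hc k hk0 hks, zero_mul]
    · have hneg1 : ¬IsSquare (-1 : ZMod p) := by
        rw [ZMod.exists_sq_eq_neg_one_iff]
        simp [hp4]
      have hnk : IsSquare (-k) := by
        have := nsq_mul_nsq hp2 hneg1 hks
        rwa [neg_one_mul] at this
      have hnk0 : -k ≠ 0 := neg_ne_zero.mpr hk0
      rw [hevalg k, hc (-k) hnk0 hnk, mul_zero, mul_zero]
  have hinjpow : ∀ i ∈ Finset.Ico 1 p, ∀ j ∈ Finset.Ico 1 p, α ^ i = α ^ j → i = j := by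
    intro i hi j hj hij
    exact hα.pow_inj (Finset.mem_Ico.mp hi).2 (Finset.mem_Ico.mp hj).2 hij
  have hemap : e.map φ = ∑ i ∈ Finset.range p, (X : Polynomial K) ^ i := by
    rw [he, Polynomial.map_sum]
    exact Finset.sum_congr rfl fun i _ => by rw [Polynomial.map_pow, map_X]
  have hedvd : e ∣ h := by
    rw [← map_dvd_map' φ]
    have hprod := prod_dvd_of_roots (Finset.Ico 1 p) (fun j => α ^ j) (h.map φ) hinjpow hroots
    have hXp : (X : Polynomial K) ^ p - 1 = ∏ i ∈ Finset.range p, (X - C (α ^ i)) :=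
      X_pow_sub_one_prod_range hppos hα
    have hsplit : Finset.range p \ {0} = Finset.Ico 1 p := by
      ext x; simp only [Finset.mem_sdiff, Finset.mem_range, Finset.mem_singleton,
        Finset.mem_Ico]; omega
    have h2 : (X : Polynomial K) ^ p - 1
        = (X - 1) * ∏ j ∈ Finset.Ico 1 p, (X - C (α ^ j)) := by
      rw [hXp, Finset.prod_eq_mul_prod_sdiff_singleton_of_mem
        (Finset.mem_range.mpr hppos : (0:ℕ) ∈ Finset.range p), hsplit, pow_zero, map_one]
    have h1 : (e.map φ) * (X - 1) = (X : Polynomial K) ^ p - 1 := by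
      rw [hemap]; exact geom_sum_mul X p
    have hX1 : (X - 1 : Polynomial K) ≠ 0 := by
      have := Polynomial.X_sub_C_ne_zero (1 : K)
      rwa [map_one] at this
    have heq : e.map φ = ∏ j ∈ Finset.Ico 1 p, (X - C (α ^ j)) := by
      apply mul_right_cancel₀ hX1
      rw [h1, h2, mul_comm]
    rw [heq]
    exact hprod
  obtain ⟨u, hu⟩ := hedvd
  have hfe : f.eval 1 = 1 := by
    rw [hf, eval_finset_sum]
    simp only [eval_pow, eval_X, one_pow]
    rw [Finset.sum_const, nsmul_eq_mul, mul_one, ← hcd, hparity]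
  have hge : g.eval 1 = 1 := by
    rw [hg, eval_finset_sum]
    simp only [eval_pow, eval_X, one_pow]
    rw [Finset.sum_const, nsmul_eq_mul, mul_one, ← hcd, hparity]
  have hh1 : h.eval 1 = 1 := by rw [hh, eval_mul, hfe, hge, one_mul]
  have hh0 : h ≠ 0 := by
    intro hz; rw [hz] at hh1; simp at hh1
  have he0 : e ≠ 0 := by
    have := monic_geom_sum_X (R := ZMod 2) (n := p) (by omega)
    rw [← he] at this
    exact this.ne_zero
  have hu0 : u ≠ 0 := by
    intro hz; rw [hz, mul_zero] at hu; exact hh0 hu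
  have hu1 : u.eval 1 = 1 := by
    have h1 : e.eval 1 * u.eval 1 = 1 := by rw [← eval_mul, ← hu, hh1]
    have : ∀ a b : ZMod 2, a * b = 1 → b = 1 := by decide
    exact this _ _ h1
  have hdegf : f.natDegree ≤ p - 1 := by
    rw [hf]
    refine natDegree_sum_le_of_forall_le _ _ fun z _ => ?_
    rw [natDegree_X_pow]
    have := z.val_lt; omega
  have hdegg : g.natDegree ≤ p - 1 := by
    rw [hg]
    refine natDegree_sum_le_of_forall_le _ _ fun z _ => ?_
    rw [natDegree_X_pow]
    omega
  have hdegh : h.natDegree ≤ 2 * p - 2 := by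
    rw [hh]
    refine natDegree_mul_le.trans ?_
    omega
  have hdege : e.natDegree = p - 1 := by
    have h1 : (e * (X - 1)).natDegree = p := by
      have : e * (X - C 1) = X ^ p - C 1 := by
        rw [map_one]
        rw [he]; exact geom_sum_mul X p
      rw [map_one] at this
      rw [this]
      have := natDegree_X_pow_sub_C (n := p) (r := (1 : ZMod 2))
      rwa [map_one] at this
    have hX1 : (X - 1 : Polynomial (ZMod 2)) ≠ 0 := by
      have := Polynomial.X_sub_C_ne_zero (1 : ZMod 2)
      rwa [map_one] at this
    rw [natDegree_mul he0 hX1] at h1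
    have : (X - 1 : Polynomial (ZMod 2)).natDegree = 1 := by
      have := natDegree_X_sub_C (1 : ZMod 2)
      rwa [map_one] at this
    omega
  have hdegu : u.natDegree ≤ p - 1 := by
    have h1 := natDegree_mul he0 hu0
    rw [← hu] at h1
    omega
  have hcoeff : ∀ n, h.coeff n = ∑ i ∈ Finset.range p, if i ≤ n then u.coeff (n - i) else 0 := by
    intro n
    have h1 : h = ∑ i ∈ Finset.range p, u * X ^ i := by
      rw [hu, he, Finset.sum_mul]
      exact Finset.sum_congr rfl fun i _ => mul_comm _ _
    rw [h1, finset_sum_coeff]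
    exact Finset.sum_congr rfl fun i _ => coeff_mul_X_pow' u i n
  have hlow : ∀ m, m < p → h.coeff m = ∑ j ∈ Finset.range (m + 1), u.coeff j := by
    intro m hm
    rw [hcoeff m]
    have hfilter : (Finset.range p).filter (· ≤ m) = Finset.range (m + 1) := by
      ext x; simp only [Finset.mem_filter, Finset.mem_range]; omega
    rw [← Finset.sum_filter, hfilter, ← Finset.sum_range_reflect]
    refine Finset.sum_congr rfl fun i hi => ?_
    congr 1
    have := Finset.mem_range.mp hi
    omega
  have hhigh : ∀ m, h.coeff (m + p) = ∑ j ∈ Finset.range p, u.coeff (m + 1 + j) := by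
    intro m
    rw [hcoeff (m + p)]
    rw [← Finset.sum_range_reflect]
    refine Finset.sum_congr rfl fun i hi => ?_
    have hip := Finset.mem_range.mp hi
    rw [if_pos (by omega)]
    congr 1
    omega
  have hsum_all : ∀ n, p - 1 ≤ n → ∑ j ∈ Finset.range (n + 1), u.coeff j = 1 := by
    intro n hn
    have h1 : u.natDegree < n + 1 := by omega
    have h2 := eval_eq_sum_range' h1 (1 : ZMod 2)
    rw [hu1] at h2
    simp only [one_pow, mul_one] at h2
    exact h2.symm
  have hpair : ∀ m, m < p → h.coeff m + h.coeff (m + p) = 1 := by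
    intro m hm
    rw [hlow m hm, hhigh m]
    have hresum : ∑ j ∈ Finset.range p, u.coeff (m + 1 + j)
        = ∑ j ∈ Finset.Ico (m + 1) (m + 1 + p), u.coeff j := by
      rw [Finset.sum_Ico_eq_sum_range]
      refine Finset.sum_congr (by congr 1; omega) fun i _ => rfl
    rw [hresum, Finset.range_eq_Ico,
      Finset.sum_Ico_consecutive _ (by omega : 0 ≤ m + 1) (by omega : m + 1 ≤ m + 1 + p)]
    rw [← Finset.range_eq_Ico, show m + 1 + p = (m + p) + 1 by omega]
    exact hsum_all (m + p) (by omega)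
  have hcoeffp1 : h.coeff (p - 1) = 1 := by
    rw [hlow (p - 1) (by omega)]
    exact hsum_all (p - 1) (le_refl _)
  have hsupp_ge : p ≤ h.support.card := by
    have hmem : ∀ m, m < p → (m ∈ h.support ∨ m + p ∈ h.support) := by
      intro m hm
      by_contra hcon
      push_neg at hcon
      obtain ⟨h1, h2⟩ := hcon
      rw [Polynomial.notMem_support_iff] at h1 h2
      have := hpair m hm
      rw [h1, h2, add_zero] at this
      exact absurd this (by decide)
    have hkey : ∀ m ∈ Finset.range p, (if m ∈ h.support then m else m + p) % p = m := by
      intro m hm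
      have hmp := Finset.mem_range.mp hm
      split_ifs
      · exact Nat.mod_eq_of_lt hmp
      · rw [Nat.add_mod_right]
        exact Nat.mod_eq_of_lt hmp
    calc p = (Finset.range p).card := (Finset.card_range p).symm
      _ ≤ h.support.card := by
          refine Finset.card_le_card_of_injOn (fun m => if m ∈ h.support then m else m + p)
            ?_ ?_
          · intro m hm
            have hmp := Finset.mem_range.mp hm
            dsimp only
            split_ifs with hms
            · exact hms
            · rcases hmem m hmp with hs | hs
              · exact absurd hs hms
              · exact hs
          · intro a ha b hb hab
            dsimp only at hab
            rw [← hkey a ha, ← hkey b hb, hab]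
  have hsupp_le : h.support.card ≤ d * d - d + 1 := by
    have hh2 : h = ∑ q ∈ S ×ˢ S, X ^ (q.1.val + (p - 1 - q.2.val)) := by
      rw [hh, hf, hg, Finset.sum_mul_sum]
      rw [Finset.sum_product]
      refine Finset.sum_congr rfl fun z _ => Finset.sum_congr rfl fun w _ => ?_
      rw [← pow_add]
    have hsub : h.support ⊆ (S ×ˢ S).image (fun q : ZMod p × ZMod p =>
        q.1.val + (p - 1 - q.2.val)) := by
      intro m hm
      rw [Polynomial.mem_support_iff, hh2, finset_sum_coeff] at hm
      have : ∃ q ∈ S ×ˢ S, ((X : Polynomial (ZMod 2)) ^ (q.1.val + (p - 1 - q.2.val))).coeff m ≠ 0 := by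
        by_contra hq
        push_neg at hq
        exact hm (Finset.sum_eq_zero hq)
      obtain ⟨q, hq, hqc⟩ := this
      rw [Polynomial.coeff_X_pow] at hqc
      have hmq : m = q.1.val + (p - 1 - q.2.val) := by
        by_contra hne
        rw [if_neg hne] at hqc
        exact hqc rfl
      exact Finset.mem_image.mpr ⟨q, hq, hmq.symm⟩
    have hsub2 : (S ×ˢ S).image (fun q : ZMod p × ZMod p => q.1.val + (p - 1 - q.2.val))
        ⊆ (S.offDiag.image (fun q : ZMod p × ZMod p => q.1.val + (p - 1 - q.2.val)))
          ∪ {p - 1} := by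
      intro m hm
      obtain ⟨q, hq, rfl⟩ := Finset.mem_image.mp hm
      obtain ⟨hq1, hq2⟩ := Finset.mem_product.mp hq
      by_cases hqd : q.1 = q.2
      · refine Finset.mem_union_right _ ?_
        rw [hqd]
        simp only [Finset.mem_singleton]
        have hv2 := q.2.val_lt
        omega
      · exact Finset.mem_union_left _ (Finset.mem_image.mpr
          ⟨q, Finset.mem_offDiag.mpr ⟨hq1, hq2, hqd⟩, rfl⟩)
    calc h.support.card ≤ _ := Finset.card_le_card (hsub.trans hsub2)
      _ ≤ (S.offDiag.image (fun q : ZMod p × ZMod p => q.1.val + (p - 1 - q.2.val))).card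
          + ({p - 1} : Finset ℕ).card := Finset.card_union_le _ _
      _ ≤ S.offDiag.card + 1 := by
          have := Finset.card_image_le (s := S.offDiag)
            (f := fun q : ZMod p × ZMod p => q.1.val + (p - 1 - q.2.val))
          simp only [Finset.card_singleton]
          omega
      _ = d * d - d + 1 := by rw [Finset.offDiag_card, ← hcd]
  have hfinal : p ≤ d * d - d + 1 := le_trans hsupp_ge hsupp_le
  have : d ^ 2 = d * d := sq d
  omega

end Main

/-- Square root bound: let `p ≡ 3 (mod 4)` be an odd prime and `d` the minimum distance
of the binary quadratic residue code of length `p` generated by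
`g_R(x) = ∏_{i∈Q}(x - α^i)`.  Then `d² - d + 1 ≥ p`. -/
theorem stmt18 (p : ℕ) (hp : p.Prime) (h4 : p % 4 = 3)
    (t : ℕ) (ht : t = orderOf (2 : ZMod p))
    (α : GaloisField 2 t) (hα : IsPrimitiveRoot α p)
    (Q : Finset ℕ)
    (hQ : (Q : Set ℕ) = {i : ℕ | i < p ∧ i ≠ 0 ∧ IsSquare ((i : ZMod p))})
    (gR : Polynomial (ZMod 2))
    (hgR : gR.map (algebraMap (ZMod 2) (GaloisField 2 t)) = ∏ i ∈ Q, (X - C (α ^ i)))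
    (d : ℕ)
    (hd : IsLeast {w : ℕ | ∃ c ∈ codeOf p gR, c ≠ 0 ∧
        w = (Finset.univ.filter (fun i => c i ≠ 0)).card} d) :
    d ^ 2 - d + 1 ≥ p := by
  classical
  haveI : Fact p.Prime := ⟨hp⟩
  set φ := algebraMap (ZMod 2) (GaloisField 2 t) with hφ
  have hQmem : ∀ i : ℕ, i ∈ Q ↔ (i < p ∧ i ≠ 0 ∧ IsSquare ((i : ZMod p))) := by
    intro i
    rw [← Finset.mem_coe, hQ]
    rfl
  -- conversion between index types
  have hzval : ∀ z : ZMod p, ((z.val : ℕ) : ZMod p) = z := by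
    intro z; rw [ZMod.natCast_val, ZMod.cast_id]
  set cz : (Fin p → ZMod 2) → (ZMod p → ZMod 2) :=
    fun c z => c ⟨z.val, z.val_lt⟩ with hcz
  -- key evaluation formula
  have hkey : ∀ (c : Fin p → ZMod 2) (k : ZMod p),
      ((toPoly p c).map φ).eval (α ^ k.val) = T α (cz c) k := by
    intro c k
    rw [toPoly, Polynomial.map_sum, eval_finset_sum, T]
    refine Fintype.sum_equiv
      (⟨fun z : ZMod p => (⟨z.val, z.val_lt⟩ : Fin p), fun i => ((i : ℕ) : ZMod p),
        fun z => by simp [hzval], fun i => by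
          apply Fin.ext
          simp [ZMod.val_cast_of_lt i.isLt]⟩ : ZMod p ≃ Fin p).symm _ _ ?_
    intro i
    simp only [Equiv.symm_apply_apply, Equiv.coe_fn_symm_mk]
    rw [Polynomial.map_mul, Polynomial.map_C, Polynomial.map_pow, map_X, eval_mul, eval_C,
      eval_pow, eval_X, ← pow_mul, hcz]
    have hv : ((((i : ℕ) : ZMod p))).val = (i : ℕ) := ZMod.val_cast_of_lt i.isLt
    congr 1
    · exact congrArg (fun j => φ (c j)) (Fin.ext hv.symm)
    · rw [ZMod.val_mul, hv, pow_mod' hα]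
  -- membership characterization
  have hmem : ∀ c : Fin p → ZMod 2,
      c ∈ codeOf p gR ↔ (∀ k : ZMod p, k ≠ 0 → IsSquare k → T α (cz c) k = 0) := by
    intro c
    have hmem0 : c ∈ codeOf p gR ↔ gR ∣ toPoly p c := Iff.rfl
    rw [hmem0, ← map_dvd_map' φ, hgR]
    constructor
    · rintro ⟨v, hv⟩ k hk hks
      have hkval : k.val ∈ Q := by
        rw [hQmem]
        refine ⟨k.val_lt, ?_, ?_⟩
        · intro hz
          exact hk (by rwa [ZMod.val_eq_zero] at hz)
        · rw [hzval]; exact hks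
      rw [← hkey c k, hv, eval_mul]
      have : (∏ i ∈ Q, (X - C (α ^ i))).eval (α ^ k.val) = 0 := by
        rw [eval_prod]
        exact Finset.prod_eq_zero hkval (by rw [eval_sub, eval_X, eval_C, sub_self])
      rw [this, zero_mul]
    · intro hz
      refine prod_dvd_of_roots Q (fun i => α ^ i) _ ?_ ?_
      · intro i hi j hj hij
        exact hα.pow_inj ((hQmem i).mp hi).1 ((hQmem j).mp hj).1 hij
      · intro q hq
        obtain ⟨hq1, hq2, hq3⟩ := (hQmem q).mp hq
        set k : ZMod p := (q : ZMod p) with hk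
        have hkv : k.val = q := ZMod.val_cast_of_lt hq1
        have hk0 : k ≠ 0 := by
          intro hkz
          rw [hkz, ZMod.val_zero] at hkv
          omega
        rw [← hkv, hkey c k]
        exact hz k hk0 hq3
  -- weight correspondence
  have hwt : ∀ c : Fin p → ZMod 2,
      (Finset.univ.filter (fun i => c i ≠ 0)).card
        = (Finset.univ.filter (fun y => cz c y ≠ 0)).card := by
    intro c
    refine Finset.card_nbij' (fun i : Fin p => ((i : ℕ) : ZMod p))
      (fun z : ZMod p => (⟨z.val, z.val_lt⟩ : Fin p)) ?_ ?_ ?_ ?_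
    · intro i hi
      simp only [Finset.mem_coe, Finset.mem_filter, Finset.mem_univ, true_and] at hi ⊢
      rw [hcz]
      dsimp only
      have : (⟨(((i : ℕ) : ZMod p)).val, (((i : ℕ) : ZMod p)).val_lt⟩ : Fin p) = i := by
        apply Fin.ext
        simp [ZMod.val_cast_of_lt i.isLt]
      rw [this]
      exact hi
    · intro z hz
      simp only [Finset.mem_coe, Finset.mem_filter, Finset.mem_univ, true_and] at hz ⊢
      exact hz
    · intro i _
      dsimp only
      apply Fin.ext
      simp [ZMod.val_cast_of_lt i.isLt]
    · intro z _
      dsimp only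
      rw [hzval]
  have hnz : ∀ c : Fin p → ZMod 2, c ≠ 0 ↔ cz c ≠ 0 := by
    intro c
    constructor
    · intro hc hcz0
      apply hc
      funext i
      have : cz c (((i : ℕ) : ZMod p)) = 0 := by rw [hcz0]; rfl
      rw [hcz] at this
      dsimp only at this
      have heq : (⟨(((i : ℕ) : ZMod p)).val, (((i : ℕ) : ZMod p)).val_lt⟩ : Fin p) = i := by
        apply Fin.ext
        simp [ZMod.val_cast_of_lt i.isLt]
      rw [heq] at this
      exact this
    · intro hcz0 hc
      apply hcz0
      funext z
      rw [hcz, hc]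
      rfl
  -- transfer IsLeast
  have hsets : {w : ℕ | ∃ c ∈ codeOf p gR, c ≠ 0 ∧
        w = (Finset.univ.filter (fun i => c i ≠ 0)).card}
      = {w : ℕ | ∃ c : ZMod p → ZMod 2,
          (∀ k : ZMod p, k ≠ 0 → IsSquare k → T α c k = 0) ∧ c ≠ 0 ∧
          w = (Finset.univ.filter (fun y => c y ≠ 0)).card} := by
    ext w
    constructor
    · rintro ⟨c, hcmem, hc0, rfl⟩
      exact ⟨cz c, (hmem c).mp hcmem, (hnz c).mp hc0, hwt c⟩
    · rintro ⟨c', hc'mem, hc'0, rfl⟩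
      set c : Fin p → ZMod 2 := fun i => c' ((i : ℕ) : ZMod p) with hcdef
      have hczc : cz c = c' := by
        funext z
        rw [hcz, hcdef]
        simp only []
        rw [hzval]
      refine ⟨c, (hmem c).mpr (by rw [hczc]; exact hc'mem), ?_, ?_⟩
      · rw [hnz c, hczc]; exact hc'0
      · rw [hwt c, hczc]
  exact aux_main p h4 hα d (hsets ▸ hd)
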